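/- Under the partial PL and smoothness setting above with κ = L_i/μ, the natural importance of block Δ_i at iteration τ (relative to initialization θ_0) satisfies I^N_{Δ_i}(θ_τ, θ_0)/L(θ_0) ≤ 8κ² + 4κ(1−ημ)^{τ/2}. -/

import Mathlib

/-- Gradient of `f : ℝ^p → ℝ` as the vector of partial derivatives. -/
noncomputable def grad {p : ℕ} (f : (Fin p → ℝ) → ℝ) (θ : Fin p → ℝ) : Fin p → ℝ :=
  fun j => fderiv ℝ f θ (Pi.single j 1)


lemma fderiv_apply_eq_sum {p : ℕ} (f : (Fin p → ℝ) → ℝ)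
    (x v : Fin p → ℝ) : fderiv ℝ f x v = ∑ j, grad f x j * v j := by
  conv_lhs => rw [← Finset.univ_sum_single v, map_sum]
  refine Finset.sum_congr rfl fun j _ => ?_
  have h : (Pi.single j (v j) : Fin p → ℝ) = v j • (Pi.single j 1 : Fin p → ℝ) := by
    ext k
    by_cases hk : k = j <;> simp [Pi.single_apply, hk]
  rw [h, map_smul]
  simp [grad, mul_comm]

lemma hasDerivAt_seg {p : ℕ} (f : (Fin p → ℝ) → ℝ) (hdiff : Differentiable ℝ f)
    (x v : Fin p → ℝ) (t : ℝ) :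
    HasDerivAt (fun t : ℝ => f (x + t • v)) (∑ j, grad f (x + t • v) j * v j) t := by
  have h1 : HasDerivAt (fun t : ℝ => x + t • v) v t := by
    simpa using ((hasDerivAt_id t).smul_const v).const_add x
  have h2 := (hdiff (x + t • v)).hasFDerivAt.comp_hasDerivAt t h1
  simpa [fderiv_apply_eq_sum f, Function.comp_def] using h2

lemma descent {p : ℕ} (f : (Fin p → ℝ) → ℝ) (hdiff : Differentiable ℝ f)
    (s : Finset (Fin p)) (L : ℝ) (hL : 0 ≤ L)
    (hlip : ∀ a b : Fin p → ℝ, (∀ j ∉ s, a j = b j) →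
      ∑ j ∈ s, (grad f a j - grad f b j) ^ 2 ≤ L ^ 2 * ∑ j ∈ s, (a j - b j) ^ 2)
    (x y : Fin p → ℝ) (hxy : ∀ j ∉ s, x j = y j) :
    f y ≤ f x + ∑ j ∈ s, grad f x j * (y j - x j) + L / 2 * ∑ j ∈ s, (y j - x j) ^ 2 := by
  set v : Fin p → ℝ := fun j => y j - x j with hv
  have hv0 : ∀ j ∉ s, v j = 0 := fun j hj => by simp [hv, (hxy j hj).symm]
  set c : ℝ := ∑ j ∈ s, grad f x j * v j with hc
  set Q : ℝ := ∑ j ∈ s, v j ^ 2 with hQ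
  have hQ0 : 0 ≤ Q := Finset.sum_nonneg fun j _ => sq_nonneg _
  -- sum over univ restricts to s
  have hsum : ∀ z : Fin p → ℝ, ∑ j, grad f z j * v j = ∑ j ∈ s, grad f z j * v j := by
    intro z
    rw [← Finset.sum_subset (Finset.subset_univ s)]
    intro j _ hj; rw [hv0 j hj, mul_zero]
  -- derivative bound on [0,1]
  have key : ∀ t ∈ Set.Icc (0:ℝ) 1, (∑ j ∈ s, grad f (x + t • v) j * v j) ≤ c + L * Q * t := by
    intro t ht
    have heq : ∀ j ∉ s, (x + t • v) j = x j := by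
      intro j hj; simp [hv0 j hj]
    have hlb := hlip (x + t • v) x heq
    have hsq : ∑ j ∈ s, ((x + t • v) j - x j) ^ 2 = t ^ 2 * Q := by
      rw [hQ, Finset.mul_sum]
      refine Finset.sum_congr rfl fun j _ => ?_
      simp [Pi.add_apply, Pi.smul_apply, smul_eq_mul]; ring
    rw [hsq] at hlb
    have hcs := Real.sum_mul_le_sqrt_mul_sqrt s
      (fun j => grad f (x + t • v) j - grad f x j) v
    have h1 : Real.sqrt (∑ j ∈ s, (grad f (x + t • v) j - grad f x j) ^ 2)
        ≤ L * t * Real.sqrt Q := by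
      have h2 : Real.sqrt (∑ j ∈ s, (grad f (x + t • v) j - grad f x j) ^ 2)
          ≤ Real.sqrt (L ^ 2 * (t ^ 2 * Q)) := Real.sqrt_le_sqrt hlb
      have h3 : Real.sqrt (L ^ 2 * (t ^ 2 * Q)) = L * t * Real.sqrt Q := by
        rw [Real.sqrt_mul (sq_nonneg L), Real.sqrt_mul (sq_nonneg t),
          Real.sqrt_sq hL, Real.sqrt_sq ht.1, mul_assoc]
      rw [h3] at h2; exact h2
    have h4 : ∑ j ∈ s, (grad f (x + t • v) j - grad f x j) * v j ≤ L * t * Q := by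
      calc ∑ j ∈ s, (grad f (x + t • v) j - grad f x j) * v j
          ≤ Real.sqrt (∑ j ∈ s, (grad f (x + t • v) j - grad f x j) ^ 2) *
            Real.sqrt (∑ j ∈ s, v j ^ 2) := hcs
        _ ≤ (L * t * Real.sqrt Q) * Real.sqrt Q := by
            apply mul_le_mul_of_nonneg_right h1 (Real.sqrt_nonneg _)
        _ = L * t * (Real.sqrt Q * Real.sqrt Q) := by ring
        _ = L * t * Q := by rw [Real.mul_self_sqrt hQ0]
    have h5 : ∑ j ∈ s, grad f (x + t • v) j * v j
        = c + ∑ j ∈ s, (grad f (x + t • v) j - grad f x j) * v j := by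
      rw [hc, ← Finset.sum_add_distrib]
      refine Finset.sum_congr rfl fun j _ => by ring
    rw [h5]; nlinarith [h4]
  -- the auxiliary function and monotonicity
  set φ : ℝ → ℝ := fun t => f (x + t • v) - c * t - L / 2 * Q * t ^ 2 with hφ
  have hφd : ∀ t : ℝ, HasDerivAt φ
      ((∑ j ∈ s, grad f (x + t • v) j * v j) - c - L * Q * t) t := by
    intro t
    have h1 := hasDerivAt_seg f hdiff x v t
    rw [hsum] at h1
    have h2 : HasDerivAt (fun t : ℝ => c * t) c t := by
      simpa using (hasDerivAt_id t).const_mul c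
    have h3 : HasDerivAt (fun t : ℝ => L / 2 * Q * t ^ 2) (L / 2 * Q * (2 * t)) t := by
      simpa using ((hasDerivAt_pow 2 t).const_mul (L / 2 * Q))
    have := (h1.sub h2).sub h3
    exact this.congr_deriv (by ring)
  have hanti : AntitoneOn φ (Set.Icc (0:ℝ) 1) := by
    apply antitoneOn_of_deriv_nonpos (convex_Icc 0 1)
    · exact fun t _ => ((hφd t).continuousAt).continuousWithinAt
    · exact fun t _ => ((hφd t).differentiableAt).differentiableWithinAt
    · intro t ht
      rw [interior_Icc] at ht
      rw [(hφd t).deriv]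
      have := key t ⟨ht.1.le, ht.2.le⟩
      linarith
  have hfinal := hanti (Set.left_mem_Icc.2 zero_le_one)
    (Set.right_mem_Icc.2 zero_le_one) zero_le_one
  have h0 : φ 0 = f x := by simp [hφ]
  have h1 : φ 1 = f y - c - L / 2 * Q := by
    have : x + (1:ℝ) • v = y := by
      ext j; simp [hv]
    rw [hφ]; simp only [this, one_pow, mul_one]
  rw [h0, h1] at hfinal
  have hceq : c = ∑ j ∈ s, grad f x j * (y j - x j) := rfl
  have hQeq : Q = ∑ j ∈ s, (y j - x j) ^ 2 := rfl
  linarith [hfinal]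

lemma grad_sq_le {p : ℕ} (f : (Fin p → ℝ) → ℝ) (hdiff : Differentiable ℝ f)
    (hmin : ∀ θ, 0 ≤ f θ) (s : Finset (Fin p)) (L : ℝ) (hL : 0 ≤ L)
    (hlip : ∀ a b : Fin p → ℝ, (∀ j ∉ s, a j = b j) →
      ∑ j ∈ s, (grad f a j - grad f b j) ^ 2 ≤ L ^ 2 * ∑ j ∈ s, (a j - b j) ^ 2)
    (x : Fin p → ℝ) : ∑ j ∈ s, grad f x j ^ 2 ≤ 2 * L * f x := by
  set G : ℝ := ∑ j ∈ s, grad f x j ^ 2 with hG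
  have hG0 : 0 ≤ G := Finset.sum_nonneg fun j _ => sq_nonneg _
  have step : ∀ t : ℝ, 0 ≤ f x - t * G + L / 2 * (t ^ 2 * G) := by
    intro t
    set y : Fin p → ℝ := fun j => if j ∈ s then x j - t * grad f x j else x j with hy
    have hxy : ∀ j ∉ s, x j = y j := fun j hj => by simp [hy, hj]
    have hd := descent f hdiff s L hL hlip x y hxy
    have hc : ∑ j ∈ s, grad f x j * (y j - x j) = -(t * G) := by
      rw [hG, Finset.mul_sum, ← Finset.sum_neg_distrib]
      refine Finset.sum_congr rfl fun j hj => ?_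
      simp only [hy, if_pos hj]; ring
    have hq : ∑ j ∈ s, (y j - x j) ^ 2 = t ^ 2 * G := by
      rw [hG, Finset.mul_sum]
      refine Finset.sum_congr rfl fun j hj => ?_
      simp only [hy, if_pos hj]; ring
    rw [hc, hq] at hd
    have := hmin y
    linarith
  rcases eq_or_lt_of_le hL with hL0 | hLpos
  · -- L = 0 : G must vanish
    have hGz : G ≤ 0 := by
      by_contra hpos
      push_neg at hpos
      have := step ((f x + 1) / G)
      rw [← hL0] at this
      have h2 : (f x + 1) / G * G = f x + 1 := div_mul_cancel₀ _ (ne_of_gt hpos)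
      nlinarith
    rw [← hL0]; simpa using hGz
  · have hstep := step (1 / L)
    have hL' : L ≠ 0 := ne_of_gt hLpos
    have h1 : (1 / L) * G = G / L := by ring
    have h2 : L / 2 * ((1 / L) ^ 2 * G) = G / (2 * L) := by
      field_simp
    rw [h1, h2] at hstep
    have h3 : G / (2 * L) ≤ f x := by
      have h4 : G / L - G / (2 * L) = G / (2 * L) := by field_simp; ring
      linarith
    calc G = (G / (2 * L)) * (2 * L) := by field_simp
      _ ≤ f x * (2 * L) := by
          apply mul_le_mul_of_nonneg_right h3; positivity
      _ = 2 * L * f x := by ring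

lemma sqrt_sum_sq_add {ι : Type*} (s : Finset ι) (a b : ι → ℝ) :
    Real.sqrt (∑ j ∈ s, (a j + b j) ^ 2) ≤
      Real.sqrt (∑ j ∈ s, a j ^ 2) + Real.sqrt (∑ j ∈ s, b j ^ 2) := by
  set A := ∑ j ∈ s, a j ^ 2 with hA
  set B := ∑ j ∈ s, b j ^ 2 with hB
  have hA0 : 0 ≤ A := Finset.sum_nonneg fun j _ => sq_nonneg _
  have hB0 : 0 ≤ B := Finset.sum_nonneg fun j _ => sq_nonneg _
  have hcs := Real.sum_mul_le_sqrt_mul_sqrt s a b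
  have hexp : ∑ j ∈ s, (a j + b j) ^ 2 = A + 2 * (∑ j ∈ s, a j * b j) + B := by
    rw [hA, hB, Finset.mul_sum, ← Finset.sum_add_distrib, ← Finset.sum_add_distrib]
    refine Finset.sum_congr rfl fun j _ => by ring
  have hle : ∑ j ∈ s, (a j + b j) ^ 2 ≤ (Real.sqrt A + Real.sqrt B) ^ 2 := by
    rw [hexp]
    have hAA : Real.sqrt A * Real.sqrt A = A := Real.mul_self_sqrt hA0
    have hBB : Real.sqrt B * Real.sqrt B = B := Real.mul_self_sqrt hB0
    nlinarith [hcs]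
  calc Real.sqrt (∑ j ∈ s, (a j + b j) ^ 2)
      ≤ Real.sqrt ((Real.sqrt A + Real.sqrt B) ^ 2) := Real.sqrt_le_sqrt hle
    _ = Real.sqrt A + Real.sqrt B :=
        Real.sqrt_sq (by positivity)

lemma geom_aux {r : ℝ} (h0 : 0 ≤ r) (h1 : r < 1) (n : ℕ) :
    ∑ t ∈ Finset.range n, r ^ t ≤ 1 / (1 - r) := by
  have hpos : 0 < 1 - r := by linarith
  rw [le_div_iff₀ hpos]
  have := geom_sum_mul r n
  have hrn : 0 ≤ r ^ n := pow_nonneg h0 n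
  nlinarith [this]

set_option maxHeartbeats 1000000

/-- Under partial PL and smoothness, the natural importance of block `Δ i` relative to
initialization satisfies `I^N_{Δ i}(θ_τ, θ_0)/f(θ_0) ≤ 8κ² + 4κ(1-ημ)^{τ/2}`, `κ = Lᵢ/μ`. -/
theorem block_importance_upper_bound {p D : ℕ} (f : (Fin p → ℝ) → ℝ)
    (hdiff : Differentiable ℝ f)
    (hmin : ∀ θ, 0 ≤ f θ) (hattain : ∃ θ, f θ = 0)
    (Δ : Fin D → Finset (Fin p))
    (hdisj : ∀ i j, i ≠ j → Disjoint (Δ i) (Δ j))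
    (hcover : ∀ k : Fin p, ∃ i, k ∈ Δ i)
    (μ Li : Fin D → ℝ)
    (horder : ∀ i, 0 ≤ μ i ∧ μ i ≤ Li i)
    (hμpos : 0 < ∑ i', μ i')
    (hPPL : ∀ i θ, 2 * μ i * f θ ≤ ∑ j ∈ Δ i, (grad f θ j) ^ 2)
    (hPLip : ∀ i (θ θ' : Fin p → ℝ), (∀ j ∉ Δ i, θ j = θ' j) →
      ∑ j ∈ Δ i, (grad f θ j - grad f θ' j) ^ 2 ≤ (Li i) ^ 2 * ∑ j ∈ Δ i, (θ j - θ' j) ^ 2)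
    (hLip : ∀ θ θ' : Fin p → ℝ,
      ∑ j, (grad f θ j - grad f θ' j) ^ 2 ≤ (∑ i', Li i') ^ 2 * ∑ j, (θ j - θ' j) ^ 2)
    (hPL : ∀ θ, 2 * (∑ i', μ i') * f θ ≤ ∑ j, (grad f θ j) ^ 2)
    (η : ℝ) (hηpos : 0 < η) (hη : η ≤ 1 / ∑ i', Li i')
    (θ : ℕ → Fin p → ℝ)
    (hgd : ∀ τ, θ (τ + 1) = fun j => θ τ j - η * grad f (θ τ) j)
    (τ : ℕ) (i : Fin D) :
    (f (fun j => if j ∈ Δ i then θ 0 j else θ τ j) - f (θ τ)) / f (θ 0) ≤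
      8 * (Li i / ∑ i', μ i') ^ 2 +
        4 * (Li i / ∑ i', μ i') * (1 - η * ∑ i', μ i') ^ ((τ : ℝ) / 2) := by
  set M : ℝ := ∑ i', μ i' with hM
  set Lb : ℝ := ∑ i', Li i' with hLb
  set K : ℝ := Li i with hK
  set f0 : ℝ := f (θ 0) with hf0
  have hf00 : 0 ≤ f0 := hf0 ▸ hmin (θ 0)
  have hK0 : 0 ≤ K := le_trans (horder i).1 (horder i).2
  have hMLb : M ≤ Lb := Finset.sum_le_sum fun j _ => (horder j).2
  have hLbpos : 0 < Lb := lt_of_lt_of_le hμpos hMLb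
  have hηL : η * Lb ≤ 1 := (le_div_iff₀ hLbpos).1 hη
  have hηM : η * M ≤ 1 := le_trans (by nlinarith) hηL
  have hηMpos : 0 < η * M := mul_pos hηpos hμpos
  set ρ : ℝ := 1 - η * M with hρ
  have hρ0 : 0 ≤ ρ := by rw [hρ]; linarith
  have hρ1 : ρ < 1 := by rw [hρ]; linarith
  set r : ℝ := Real.sqrt ρ with hr
  have hr0 : 0 ≤ r := Real.sqrt_nonneg _
  have hr2 : r ^ 2 = ρ := Real.sq_sqrt hρ0
  have hr1 : r ≤ 1 := Real.sqrt_le_one.mpr hρ1.le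
  have hrlt : 1 - r > 0 := by nlinarith
  -- linear convergence
  have decay : ∀ t, f (θ (t + 1)) ≤ ρ * f (θ t) := by
    intro t
    have hd := descent f hdiff Finset.univ Lb hLbpos.le
      (fun a b _ => hLip a b) (θ t) (θ (t + 1)) (fun j hj => absurd (Finset.mem_univ j) hj)
    set S : ℝ := ∑ j, grad f (θ t) j ^ 2 with hS
    have hS0 : 0 ≤ S := Finset.sum_nonneg fun j _ => sq_nonneg _
    have hc : ∑ j, grad f (θ t) j * (θ (t + 1) j - θ t j) = -(η * S) := by
      rw [hS, Finset.mul_sum, ← Finset.sum_neg_distrib]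
      refine Finset.sum_congr rfl fun j _ => ?_
      rw [hgd t]; ring
    have hq : ∑ j, (θ (t + 1) j - θ t j) ^ 2 = η ^ 2 * S := by
      rw [hS, Finset.mul_sum]
      refine Finset.sum_congr rfl fun j _ => ?_
      rw [hgd t]; ring
    rw [hc, hq] at hd
    have hpl := hPL (θ t)
    rw [← hS] at hpl
    have hint1 : 0 ≤ η * S - η * Lb * (η * S) :=
      by nlinarith [mul_nonneg (mul_nonneg hηpos.le hS0) (sub_nonneg.2 hηL)]
    have hint2 : η * (2 * M * f (θ t)) ≤ η * S := by
      apply mul_le_mul_of_nonneg_left hpl hηpos.le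
    rw [hρ]
    nlinarith [hd, hint1, hint2]
  have lin : ∀ t, f (θ t) ≤ ρ ^ t * f0 := by
    intro t
    induction t with
    | zero => simp [hf0]
    | succ n ih =>
      calc f (θ (n + 1)) ≤ ρ * f (θ n) := decay n
        _ ≤ ρ * (ρ ^ n * f0) := by apply mul_le_mul_of_nonneg_left ih hρ0
        _ = ρ ^ (n + 1) * f0 := by ring
  -- block gradient bound
  set B : ℝ := Real.sqrt (2 * K * f0) with hB
  have hB0 : 0 ≤ B := Real.sqrt_nonneg _
  have hB2 : B ^ 2 = 2 * K * f0 := Real.sq_sqrt (by nlinarith)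
  have hBB : B * B = 2 * K * f0 := by nlinarith [hB2]
  have hGsq : ∀ t, Real.sqrt (∑ j ∈ Δ i, grad f (θ t) j ^ 2) ≤ B * r ^ t := by
    intro t
    have h1 : ∑ j ∈ Δ i, grad f (θ t) j ^ 2 ≤ 2 * K * f (θ t) :=
      grad_sq_le f hdiff hmin (Δ i) K hK0 (hPLip i) (θ t)
    have h2 : 2 * K * f (θ t) ≤ (r ^ t) ^ 2 * (2 * K * f0) := by
      have he : (r ^ t) ^ 2 = ρ ^ t := by
        rw [← pow_mul, mul_comm t 2, pow_mul, hr2]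
      rw [he]
      nlinarith [lin t, hmin (θ t), pow_nonneg hρ0 t]
    calc Real.sqrt (∑ j ∈ Δ i, grad f (θ t) j ^ 2)
        ≤ Real.sqrt ((r ^ t) ^ 2 * (2 * K * f0)) := Real.sqrt_le_sqrt (h1.trans h2)
      _ = r ^ t * B := by
          rw [Real.sqrt_mul (sq_nonneg _), Real.sqrt_sq (pow_nonneg hr0 t), hB]
      _ = B * r ^ t := mul_comm _ _
  -- distance bound
  have dist : ∀ n : ℕ, Real.sqrt (∑ j ∈ Δ i, (θ n j - θ 0 j) ^ 2) ≤
      ∑ t ∈ Finset.range n, η * Real.sqrt (∑ j ∈ Δ i, grad f (θ t) j ^ 2) := by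
    intro n
    induction n with
    | zero => simp
    | succ n ih =>
      have hsplit : ∀ j : Fin p, θ (n + 1) j - θ 0 j =
          (θ (n + 1) j - θ n j) + (θ n j - θ 0 j) := fun j => by ring
      have htri : Real.sqrt (∑ j ∈ Δ i, (θ (n + 1) j - θ 0 j) ^ 2) ≤
          Real.sqrt (∑ j ∈ Δ i, (θ (n + 1) j - θ n j) ^ 2) +
          Real.sqrt (∑ j ∈ Δ i, (θ n j - θ 0 j) ^ 2) := by
        simp_rw [hsplit]
        exact sqrt_sum_sq_add (Δ i) _ _
      have hstep : Real.sqrt (∑ j ∈ Δ i, (θ (n + 1) j - θ n j) ^ 2) =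
          η * Real.sqrt (∑ j ∈ Δ i, grad f (θ n) j ^ 2) := by
        have he : ∑ j ∈ Δ i, (θ (n + 1) j - θ n j) ^ 2 =
            η ^ 2 * ∑ j ∈ Δ i, grad f (θ n) j ^ 2 := by
          rw [Finset.mul_sum]
          refine Finset.sum_congr rfl fun j _ => ?_
          rw [hgd n]; ring
        rw [he, Real.sqrt_mul (sq_nonneg _), Real.sqrt_sq hηpos.le]
      rw [Finset.sum_range_succ]
      rw [hstep] at htri
      linarith [ih, htri]
  have distbound : Real.sqrt (∑ j ∈ Δ i, (θ τ j - θ 0 j) ^ 2) ≤ 2 * B / M := by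
    have h1 : ∑ t ∈ Finset.range τ, η * Real.sqrt (∑ j ∈ Δ i, grad f (θ t) j ^ 2)
        ≤ ∑ t ∈ Finset.range τ, η * (B * r ^ t) :=
      Finset.sum_le_sum fun t _ => mul_le_mul_of_nonneg_left (hGsq t) hηpos.le
    have h2 : ∑ t ∈ Finset.range τ, η * (B * r ^ t) = η * B * ∑ t ∈ Finset.range τ, r ^ t := by
      rw [Finset.mul_sum]
      exact Finset.sum_congr rfl fun t _ => by ring
    have h3 : ∑ t ∈ Finset.range τ, r ^ t ≤ 1 / (1 - r) := geom_aux hr0 (by linarith) τ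
    have h4 : 1 / (1 - r) ≤ 2 / (η * M) := by
      rw [div_le_div_iff₀ hrlt hηMpos]
      nlinarith [hr2]
    have h5 : η * B * ∑ t ∈ Finset.range τ, r ^ t ≤ η * B * (2 / (η * M)) :=
      mul_le_mul_of_nonneg_left (h3.trans h4) (by positivity)
    have h6 : η * B * (2 / (η * M)) = 2 * B / M := by
      field_simp
    calc Real.sqrt (∑ j ∈ Δ i, (θ τ j - θ 0 j) ^ 2)
        ≤ ∑ t ∈ Finset.range τ, η * Real.sqrt (∑ j ∈ Δ i, grad f (θ t) j ^ 2) := dist τ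
      _ ≤ η * B * ∑ t ∈ Finset.range τ, r ^ t := by rw [← h2]; exact h1
      _ ≤ 2 * B / M := by rw [← h6]; exact h5
  -- importance bound via descent on the block
  set y : Fin p → ℝ := fun j => if j ∈ Δ i then θ 0 j else θ τ j with hy
  have hd := descent f hdiff (Δ i) K hK0 (hPLip i) (θ τ) y
    (fun j hj => by simp [hy, hj])
  set Dst : ℝ := Real.sqrt (∑ j ∈ Δ i, (θ τ j - θ 0 j) ^ 2) with hDst
  have hDst0 : 0 ≤ Dst := Real.sqrt_nonneg _
  have hDub : Dst ≤ 2 * B / M := distbound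
  set Gτ : ℝ := Real.sqrt (∑ j ∈ Δ i, grad f (θ τ) j ^ 2) with hGτ
  have hGτ0 : 0 ≤ Gτ := Real.sqrt_nonneg _
  have hGub : Gτ ≤ B * r ^ τ := hGsq τ
  have hcb : ∑ j ∈ Δ i, grad f (θ τ) j * (y j - θ τ j) ≤ Gτ * Dst := by
    have heq : ∀ j ∈ Δ i, y j - θ τ j = θ 0 j - θ τ j := fun j hj => by simp [hy, hj]
    have hsame : ∑ j ∈ Δ i, (θ 0 j - θ τ j) ^ 2 = ∑ j ∈ Δ i, (θ τ j - θ 0 j) ^ 2 :=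
      Finset.sum_congr rfl fun j _ => by ring
    calc ∑ j ∈ Δ i, grad f (θ τ) j * (y j - θ τ j)
        = ∑ j ∈ Δ i, grad f (θ τ) j * (θ 0 j - θ τ j) :=
          Finset.sum_congr rfl fun j hj => by rw [heq j hj]
      _ ≤ Real.sqrt (∑ j ∈ Δ i, grad f (θ τ) j ^ 2) *
          Real.sqrt (∑ j ∈ Δ i, (θ 0 j - θ τ j) ^ 2) :=
          Real.sum_mul_le_sqrt_mul_sqrt _ _ _
      _ = Gτ * Dst := by rw [hGτ, hDst, hsame]
  have hqb : ∑ j ∈ Δ i, (y j - θ τ j) ^ 2 = Dst ^ 2 := by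
    rw [hDst, Real.sq_sqrt (Finset.sum_nonneg fun j _ => sq_nonneg _)]
    refine Finset.sum_congr rfl fun j hj => ?_
    rw [show y j - θ τ j = θ 0 j - θ τ j from by simp [hy, hj]]
    ring
  have hnum : f y - f (θ τ) ≤ 4 * (K / M) * r ^ τ * f0 + 4 * (K / M) ^ 2 * f0 := by
    rw [hqb] at hd
    have hc2 : Gτ * Dst ≤ (B * r ^ τ) * (2 * B / M) :=
      mul_le_mul hGub hDub hDst0 (by positivity)
    have hq2 : Dst ^ 2 ≤ (2 * B / M) ^ 2 := pow_le_pow_left₀ hDst0 hDub 2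
    have e1 : (B * r ^ τ) * (2 * B / M) = 4 * (K / M) * r ^ τ * f0 := by
      calc (B * r ^ τ) * (2 * B / M) = (B * B) * (2 * r ^ τ) / M := by ring
        _ = (2 * K * f0) * (2 * r ^ τ) / M := by rw [hBB]
        _ = 4 * (K / M) * r ^ τ * f0 := by ring
    have e2 : K / 2 * (2 * B / M) ^ 2 = 4 * (K / M) ^ 2 * f0 := by
      calc K / 2 * (2 * B / M) ^ 2 = (B * B) * (2 * K) / M ^ 2 := by ring
        _ = (2 * K * f0) * (2 * K) / M ^ 2 := by rw [hBB]
        _ = 4 * (K / M) ^ 2 * f0 := by ring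
    have t1 : ∑ j ∈ Δ i, grad f (θ τ) j * (y j - θ τ j) ≤ 4 * (K / M) * r ^ τ * f0 := by
      rw [← e1]; exact hcb.trans hc2
    have t2 : K / 2 * Dst ^ 2 ≤ 4 * (K / M) ^ 2 * f0 := by
      rw [← e2]
      exact mul_le_mul_of_nonneg_left hq2 (by positivity)
    linarith [hd, t1, t2]
  -- rpow rewriting
  have hrpow : ρ ^ ((τ : ℝ) / 2) = r ^ τ := by
    rw [show ((τ : ℝ) / 2) = (1 / 2 : ℝ) * (τ : ℝ) by ring,
      Real.rpow_mul hρ0, ← Real.sqrt_eq_rpow, ← hr, Real.rpow_natCast]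
  rw [hrpow]
  -- conclude
  rcases eq_or_lt_of_le hf00 with hz | hpos
  · rw [← hz, div_zero]
    have h1 : 0 ≤ 8 * (K / M) ^ 2 := by positivity
    have h2 : 0 ≤ 4 * (K / M) * r ^ τ :=
      mul_nonneg (mul_nonneg (by norm_num) (div_nonneg hK0 hμpos.le)) (pow_nonneg hr0 τ)
    linarith
  · rw [div_le_iff₀ hpos]
    have hKM : 0 ≤ (K / M) ^ 2 * f0 := mul_nonneg (sq_nonneg _) hf00
    nlinarith [hnum]
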